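/- arXiv:1302.1216 — 3 statements merged into one kernel-verified Lean document; each statement's English description precedes it below -/
import Mathlib

section
/- Let X and Y be independent exponential random variables with means γ_AB > 0 and γ_AR > 0, let ρ > 0 and R ≥ 0. Then P((1 + ρX)/(1 + ρY) < 2^R) = 1 − (γ_AB/(2^R γ_AR + γ_AB)) · exp(−(2^R − 1)/(ρ γ_AB)). -/
open MeasureTheory ProbabilityTheory Real Set
open scoped ENNReal

lemma expMeasure_Iio_aux {r t : ℝ} (hr : 0 < r) (ht : 0 ≤ t) :
    expMeasure r (Iio t) = ENNReal.ofReal (1 - Real.exp (-(r * t))) := by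
  have h : expMeasure r = MeasureTheory.volume.withDensity (exponentialPDF r) := rfl
  rw [h, withDensity_apply _ measurableSet_Iio,
    Measure.restrict_congr_set Iio_ae_eq_Iic,
    lintegral_exponentialPDF_eq_antiDeriv hr t, if_pos ht]

lemma integral_exp_neg_mul_Ioi_zero_aux {b : ℝ} (hb : 0 < b) :
    ∫ x in Ioi (0:ℝ), Real.exp (-(b * x)) = 1 / b := by
  have h := integral_comp_mul_left_Ioi (fun x => Real.exp (-x)) 0 hb
  simp only [mul_zero, integral_exp_neg_Ioi, neg_zero, Real.exp_zero, smul_eq_mul,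
    mul_one] at h
  rw [h, one_div]

lemma exp_neg_mul_integrableOn_Ioi_aux {b : ℝ} (hb : 0 < b) :
    IntegrableOn (fun y => Real.exp (-(b * y))) (Ioi (0:ℝ)) := by
  simpa [neg_mul] using exp_neg_integrableOn_Ioi 0 hb

/-- Secrecy outage probability of direct transmission: for independent exponentials
`X, Y` with means `γAB, γAR`, SNR `ρ > 0` and target rate `R ≥ 0`,
`P((1+ρX)/(1+ρY) < 2^R) = 1 - γAB/(2^R γAR + γAB) * exp(-(2^R-1)/(ρ γAB))`. -/
theorem sop_direct_transmission {Ω : Type*} [MeasurableSpace Ω] (μ : Measure Ω)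
    [IsProbabilityMeasure μ] (γAB γAR ρ R : ℝ) (hAB : 0 < γAB) (hAR : 0 < γAR)
    (hρ : 0 < ρ) (hR : 0 ≤ R) (X Y : Ω → ℝ)
    (hXm : Measurable X) (hYm : Measurable Y)
    (hX : Measure.map X μ = expMeasure (1 / γAB))
    (hY : Measure.map Y μ = expMeasure (1 / γAR))
    (hXY : IndepFun X Y μ) :
    μ {ω | (1 + ρ * X ω) / (1 + ρ * Y ω) < (2 : ℝ) ^ R}
      = ENNReal.ofReal
          (1 - γAB / ((2 : ℝ) ^ R * γAR + γAB) * Real.exp (-((2 : ℝ) ^ R - 1) / (ρ * γAB))) := by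
  set τ : ℝ := (2 : ℝ) ^ R with hτdef
  have hτ1 : 1 ≤ τ := Real.one_le_rpow (by norm_num) hR
  have hτ0 : 0 < τ := lt_of_lt_of_le one_pos hτ1
  set a : ℝ := 1 / γAB with hadef
  set b : ℝ := 1 / γAR with hbdef
  have ha : 0 < a := by positivity
  have hb : 0 < b := by positivity
  set c : ℝ := (τ - 1) / ρ with hcdef
  have hc0 : 0 ≤ c := div_nonneg (by linarith) hρ.le
  have hpc : ρ * c = τ - 1 := by
    rw [hcdef, mul_comm, div_mul_cancel₀ _ hρ.ne']
  haveI := isProbabilityMeasure_expMeasure ha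
  haveI := isProbabilityMeasure_expMeasure hb
  set S : Set (ℝ × ℝ) := {p : ℝ × ℝ | (1 + ρ * p.2) / (1 + ρ * p.1) < τ} with hSdef
  have hSm : MeasurableSet S := by
    apply measurableSet_lt ?_ measurable_const
    exact (measurable_const.add (measurable_snd.const_mul ρ)).div
      (measurable_const.add (measurable_fst.const_mul ρ))
  have hmap : μ.map (fun ω => (Y ω, X ω)) = (expMeasure b).prod (expMeasure a) := by
    rw [← hY, ← hX]
    exact (indepFun_iff_map_prod_eq_prod_map_map hYm.aemeasurable hXm.aemeasurable).mp hXY.symm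
  have hevent : {ω | (1 + ρ * X ω) / (1 + ρ * Y ω) < τ} = (fun ω => (Y ω, X ω)) ⁻¹' S := rfl
  rw [hevent, ← Measure.map_apply (hYm.prodMk hXm) hSm, hmap, Measure.prod_apply hSm]
  have hFm : Measurable fun y => expMeasure a (Prod.mk y ⁻¹' S) :=
    measurable_measure_prodMk_left hSm
  have hwd : expMeasure b = MeasureTheory.volume.withDensity (exponentialPDF b) := rfl
  have hpdfm : Measurable (exponentialPDF b) :=
    (measurable_exponentialPDFReal b).ennreal_ofReal
  rw [hwd, lintegral_withDensity_eq_lintegral_mul _ hpdfm hFm]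
  -- split off the negative half line
  rw [← lintegral_add_compl
    (f := fun y => (exponentialPDF b * fun y => expMeasure a (Prod.mk y ⁻¹' S)) y)
    (measurableSet_Iio (a := (0:ℝ)))]
  have hneg : ∫⁻ y in Iio (0:ℝ),
      (exponentialPDF b * fun y => expMeasure a (Prod.mk y ⁻¹' S)) y = 0 := by
    rw [setLIntegral_congr_fun_ae measurableSet_Iio
      (ae_of_all _ (fun y (hy : y < 0) => ?_)), lintegral_zero]
    show exponentialPDF b y * _ = (0:ℝ≥0∞)
    rw [exponentialPDF_of_neg hy, zero_mul]
  rw [hneg, zero_add, compl_Iio,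
    ← Measure.restrict_congr_set (Ioi_ae_eq_Ici : Ioi (0:ℝ) =ᵐ[MeasureTheory.volume] Ici 0)]
  -- the real-valued integrand on the positive half line
  set h : ℝ → ℝ :=
    fun y => b * Real.exp (-(b * y)) - b * Real.exp (-(a * c)) * Real.exp (-((b + a * τ) * y))
    with hhdef
  have hid : ∀ y : ℝ,
      b * Real.exp (-(b * y)) * (1 - Real.exp (-(a * (c + τ * y)))) = h y := by
    intro y
    have e : Real.exp (-(b * y)) * Real.exp (-(a * (c + τ * y)))
        = Real.exp (-(a * c)) * Real.exp (-((b + a * τ) * y)) := by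
      rw [← Real.exp_add, ← Real.exp_add]; congr 1; ring
    simp only [hhdef]
    linear_combination (-b) * e
  have hset : ∀ y : ℝ, 0 ≤ y → Prod.mk y ⁻¹' S = Iio (c + τ * y) := by
    intro y hy
    have h1y : 0 < 1 + ρ * y := by nlinarith
    ext x
    simp only [hSdef, mem_preimage, mem_setOf_eq, mem_Iio, div_lt_iff₀ h1y]
    constructor
    · intro hlt; nlinarith
    · intro hlt; nlinarith
  have hptw : ∀ y : ℝ, 0 < y →
      (exponentialPDF b * fun y => expMeasure a (Prod.mk y ⁻¹' S)) y
        = ENNReal.ofReal (h y) := by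
    intro y hy
    show exponentialPDF b y * expMeasure a (Prod.mk y ⁻¹' S) = _
    rw [hset y hy.le, exponentialPDF_of_nonneg hy.le,
      expMeasure_Iio_aux ha (by positivity),
      ← ENNReal.ofReal_mul (by positivity), hid y]
  rw [setLIntegral_congr_fun_ae measurableSet_Ioi
    (ae_of_all _ (fun y (hy : 0 < y) => hptw y hy))]
  -- convert to a real integral
  have hint : IntegrableOn h (Ioi (0:ℝ)) := by
    exact ((exp_neg_mul_integrableOn_Ioi_aux hb).const_mul b).sub
      (((exp_neg_mul_integrableOn_Ioi_aux (b := b + a * τ) (by positivity)).const_mul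
        (b * Real.exp (-(a * c)))))
  have hnn : 0 ≤ᵐ[MeasureTheory.volume.restrict (Ioi (0:ℝ))] h := by
    refine (ae_restrict_iff' measurableSet_Ioi).mpr (ae_of_all _ (fun y hy => ?_))
    have hy0 : (0:ℝ) < y := hy
    show (0:ℝ) ≤ h y
    rw [← hid y]
    have hle1 : Real.exp (-(a * (c + τ * y))) ≤ 1 := by
      rw [Real.exp_le_one_iff]
      nlinarith [mul_nonneg ha.le hc0, mul_pos ha (mul_pos hτ0 hy0)]
    have : 0 ≤ 1 - Real.exp (-(a * (c + τ * y))) := by linarith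
    positivity
  rw [← ofReal_integral_eq_lintegral_ofReal hint hnn]
  -- compute the real integral
  have hI : ∫ y in Ioi (0:ℝ), h y = 1 - Real.exp (-(a * c)) * (b / (b + a * τ)) := by
    rw [hhdef]
    rw [integral_sub ((exp_neg_mul_integrableOn_Ioi_aux hb).const_mul b)
      (((exp_neg_mul_integrableOn_Ioi_aux (b := b + a * τ) (by positivity)).const_mul
        (b * Real.exp (-(a * c)))))]
    rw [integral_const_mul, integral_const_mul, integral_exp_neg_mul_Ioi_zero_aux hb,
      integral_exp_neg_mul_Ioi_zero_aux (by positivity : (0:ℝ) < b + a * τ)]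
    field_simp
  rw [hI]
  congr 1
  have hden : (0:ℝ) < τ * γAR + γAB := by positivity
  have h1 : a * c = (τ - 1) / (ρ * γAB) := by
    rw [hadef, hcdef, div_mul_div_comm, one_mul, mul_comm γAB ρ]
  have h2 : b / (b + a * τ) = γAB / (τ * γAR + γAB) := by
    rw [hadef, hbdef, div_eq_div_iff (ne_of_gt (by positivity)) hden.ne']
    field_simp
    try ring
  rw [h1, h2, neg_div]
  ring
end

section
/- Let U and V be independent with U = X/Y for X, Y independent exponentials with means γ_AB, γ_AR, and V = W/(W + γ_AR + 1/ρ) for W exponential with mean γ_RB independent of X, Y. Then P(U + V > 1) = μ₁(β₁ − 1) e^{μ₁ β₁} Ei(−μ₁ β₁) + 1, where μ₁ = (γ_AR + 1/ρ)/γ_RB and β₁ = 1 + γ_AR/γ_AB. -/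
open MeasureTheory ProbabilityTheory Real Set

theorem integral_Ioi_comp_add_right' (f : ℝ → ℝ) (a d : ℝ) :
    ∫ x in Ioi a, f (x + d) = ∫ x in Ioi (a + d), f x := by
  have A : MeasurableEmbedding fun x : ℝ => x + d :=
    (Homeomorph.addRight d).isClosedEmbedding.measurableEmbedding
  have h := A.setIntegral_map (μ := volume) f (Ioi (a + d))
  rw [map_add_right_eq_self (volume : Measure ℝ) d] at h
  have hp : (fun x : ℝ => x + d) ⁻¹' Ioi (a + d) = Ioi a := by
    ext x; simp [mem_preimage, mem_Ioi]
  rw [hp] at h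
  exact h.symm

theorem integral_exp_neg_mul_Ioi_zero' {a : ℝ} (ha : 0 < a) :
    ∫ x in Ioi (0:ℝ), Real.exp (-(a * x)) = a⁻¹ := by
  have := integral_comp_mul_left_Ioi (fun u => Real.exp (-u)) 0 ha
  simp only [mul_zero, smul_eq_mul] at this
  rw [this, integral_exp_neg_Ioi_zero, mul_one]

/-- The exponential integral `Ei x = ∫_{-∞}^x e^t / t dt`. -/
noncomputable def Ei (x : ℝ) : ℝ := ∫ t in Set.Iic x, Real.exp t / t

lemma Ei_neg_eq' (m : ℝ) : Ei (-m) = -∫ s in Ioi m, Real.exp (-s) / s := by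
  have h := integral_comp_neg_Ioi m (fun t => Real.exp t / t)
  rw [Ei, ← h, ← integral_neg]
  refine setIntegral_congr_fun measurableSet_Ioi fun x _ => ?_
  rw [div_neg]

lemma integrableOn_exp_neg_mul_Ioi' {l a : ℝ} (hl : 0 < l) :
    IntegrableOn (fun x : ℝ => Real.exp (-(l * x))) (Ioi a) := by
  simpa [neg_mul] using exp_neg_integrableOn_Ioi a hl

lemma integrable_exp_div_add' {l b : ℝ} (hl : 0 < l) (hb : 0 < b) :
    IntegrableOn (fun w => Real.exp (-(l * w)) / (w + b)) (Ioi 0) := by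
  refine Integrable.mono' ((integrableOn_exp_neg_mul_Ioi' (a := 0) hl).const_mul b⁻¹)
    ?_ ?_
  · exact ((Real.measurable_exp.comp (measurable_id.const_mul l).neg).div
      (measurable_id.add_const b)).aestronglyMeasurable
  · refine (ae_restrict_iff' measurableSet_Ioi).mpr (ae_of_all _ fun w hw => ?_)
    have hw0 : (0:ℝ) < w := hw
    have hwb : 0 < w + b := by linarith
    rw [norm_div, Real.norm_eq_abs, Real.norm_eq_abs, abs_of_pos (Real.exp_pos _),
      abs_of_pos hwb, div_le_iff₀ hwb]
    calc Real.exp (-(l*w)) = b⁻¹ * Real.exp (-(l*w)) * b := by field_simp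
    _ ≤ b⁻¹ * Real.exp (-(l*w)) * (w + b) := by
        have : (0:ℝ) < b⁻¹ * Real.exp (-(l*w)) := by positivity
        nlinarith

lemma key_subst' {l b : ℝ} (hl : 0 < l) (hb : 0 < b) :
    ∫ w in Ioi (0:ℝ), Real.exp (-(l * w)) / (w + b)
      = Real.exp (l * b) * ∫ s in Ioi (l * b), Real.exp (-s) / s := by
  have h1 : ∫ s in Ioi (l * b), Real.exp (-s) / s
      = ∫ u in Ioi (0:ℝ), Real.exp (-(u + l * b)) / (u + l * b) := by
    rw [integral_Ioi_comp_add_right' (fun s => Real.exp (-s) / s) 0 (l * b), zero_add]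
  have h2 : ∫ w in Ioi (0:ℝ), Real.exp (-(l * w + l * b)) / (l * w + l * b)
      = l⁻¹ * ∫ u in Ioi (0:ℝ), Real.exp (-(u + l * b)) / (u + l * b) := by
    have := integral_comp_mul_left_Ioi (fun u => Real.exp (-(u + l * b)) / (u + l * b)) 0 hl
    simp only [mul_zero, smul_eq_mul] at this
    exact this
  have h3 : ∀ w ∈ Ioi (0:ℝ), Real.exp (-(l * w + l * b)) / (l * w + l * b)
      = Real.exp (-(l * b)) * l⁻¹ * (Real.exp (-(l * w)) / (w + b)) := by
    intro w hw
    have hw0 : (0:ℝ) < w := hw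
    have he : -(l * w + l * b) = -(l * w) + -(l * b) := by ring
    rw [he, Real.exp_add]
    have hwb : w + b ≠ 0 := by positivity
    have hlwb : l * w + l * b = l * (w + b) := by ring
    rw [hlwb]
    field_simp
  have h4 : ∫ w in Ioi (0:ℝ), Real.exp (-(l * w + l * b)) / (l * w + l * b)
      = Real.exp (-(l * b)) * l⁻¹ * ∫ w in Ioi (0:ℝ), Real.exp (-(l * w)) / (w + b) := by
    rw [← integral_const_mul]
    exact setIntegral_congr_fun measurableSet_Ioi h3
  have hJ : ∫ s in Ioi (l * b), Real.exp (-s) / s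
      = Real.exp (-(l * b)) * ∫ w in Ioi (0:ℝ), Real.exp (-(l * w)) / (w + b) := by
    rw [h1]
    have h2' : ∫ u in Ioi (0:ℝ), Real.exp (-(u + l * b)) / (u + l * b)
        = l * ∫ w in Ioi (0:ℝ), Real.exp (-(l * w + l * b)) / (l * w + l * b) := by
      rw [h2]; field_simp
    rw [h2', h4]
    have hl' : l ≠ 0 := hl.ne'
    field_simp
    try ring
  rw [hJ, ← mul_assoc, ← Real.exp_add]
  simp

lemma final_integral' {l c b : ℝ} (hl : 0 < l) (hc : 0 < c) (hcb : c ≤ b) :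
    ∫ w in Ioi (0:ℝ), l * Real.exp (-(l * w)) * ((w + c) / (w + b))
      = l * (b - c) * Real.exp (l * b) * Ei (-(l * b)) + 1 := by
  have hb : 0 < b := lt_of_lt_of_le hc hcb
  have hpt : ∀ w ∈ Ioi (0:ℝ), l * Real.exp (-(l * w)) * ((w + c) / (w + b))
      = l * Real.exp (-(l * w)) - (l * (b - c)) * (Real.exp (-(l * w)) / (w + b)) := by
    intro w hw
    have hw0 : (0:ℝ) < w := hw
    have hwb : w + b ≠ 0 := by positivity
    field_simp
    ring
  rw [setIntegral_congr_fun measurableSet_Ioi hpt]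
  rw [integral_sub ((integrableOn_exp_neg_mul_Ioi' hl).const_mul l)
    ((integrable_exp_div_add' hl hb).const_mul (l * (b - c)))]
  rw [integral_const_mul, integral_const_mul, integral_exp_neg_mul_Ioi_zero' hl,
    key_subst' hl hb, Ei_neg_eq']
  field_simp
  ring

lemma expMeasure_apply' (r : ℝ) {s : Set ℝ} (hs : MeasurableSet s) :
    expMeasure r s = ∫⁻ x in s, exponentialPDF r x :=
  withDensity_apply _ hs

lemma expMeasure_Iic' {r x : ℝ} (hr : 0 < r) :
    expMeasure r (Iic x) = ENNReal.ofReal (if 0 ≤ x then 1 - Real.exp (-(r * x)) else 0) := by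
  rw [expMeasure_apply' r measurableSet_Iic, lintegral_exponentialPDF_eq_antiDeriv hr]

lemma expMeasure_Iic_zero' {r : ℝ} (hr : 0 < r) : expMeasure r (Iic 0) = 0 := by
  rw [expMeasure_Iic' hr]; simp

lemma expMeasure_Ioi' {r t : ℝ} (hr : 0 < r) (ht : 0 ≤ t) :
    expMeasure r (Ioi t) = ENNReal.ofReal (Real.exp (-(r * t))) := by
  haveI := isProbabilityMeasure_expMeasure hr
  have h1 : Ioi t = (Iic t)ᶜ := by ext x; simp
  rw [h1, measure_compl measurableSet_Iic (measure_ne_top _ _), expMeasure_Iic' hr, if_pos ht]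
  have he : Real.exp (-(r * t)) ≤ 1 := by
    rw [← Real.exp_zero]; exact Real.exp_le_exp.mpr (by nlinarith)
  rw [measure_univ, ← ENNReal.ofReal_one, ← ENNReal.ofReal_sub _ (by linarith)]
  norm_num

lemma expMeasure_ae_pos' {r : ℝ} (hr : 0 < r) : ∀ᵐ x ∂expMeasure r, 0 < x := by
  rw [ae_iff]
  have h : {x : ℝ | ¬ 0 < x} = Iic 0 := by ext x; simp
  rw [h]
  exact expMeasure_Iic_zero' hr

lemma lintegral_expMeasure_ofReal' {r : ℝ} (hr : 0 < r) {f : ℝ → ℝ} (hf : Measurable f)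
    (h0 : ∀ y, 0 ≤ y → 0 ≤ f y)
    (hi : IntegrableOn (fun y => r * Real.exp (-(r * y)) * f y) (Ioi 0)) :
    ∫⁻ y, ENNReal.ofReal (f y) ∂expMeasure r
      = ENNReal.ofReal (∫ y in Ioi 0, r * Real.exp (-(r * y)) * f y) := by
  have hpdf : Measurable (exponentialPDF r) := (measurable_exponentialPDFReal r).ennreal_ofReal
  rw [show expMeasure r = volume.withDensity (exponentialPDF r) from rfl,
    lintegral_withDensity_eq_lintegral_mul volume hpdf hf.ennreal_ofReal]
  simp only [Pi.mul_apply]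
  have hsplit := lintegral_add_compl (μ := volume)
    (fun y => exponentialPDF r y * ENNReal.ofReal (f y)) (measurableSet_Iio (a := (0:ℝ)))
  rw [← hsplit]
  have hzero : ∫⁻ y in Iio (0:ℝ), exponentialPDF r y * ENNReal.ofReal (f y) = 0 := by
    rw [setLIntegral_congr_fun measurableSet_Iio
      (fun y (hy : y < 0) => by
        rw [exponentialPDF_of_neg hy, zero_mul])]
    simp
  rw [hzero, zero_add, compl_Iio]
  have hcong : ∫⁻ y in Ici (0:ℝ), exponentialPDF r y * ENNReal.ofReal (f y)
      = ∫⁻ y in Ici (0:ℝ), ENNReal.ofReal (r * Real.exp (-(r * y)) * f y) := by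
    refine setLIntegral_congr_fun measurableSet_Ici (fun y (hy : 0 ≤ y) => ?_)
    rw [exponentialPDF_of_nonneg hy, ← ENNReal.ofReal_mul (by positivity)]
  rw [hcong]
  have hIci : IntegrableOn (fun y => r * Real.exp (-(r * y)) * f y) (Ici 0) :=
    (integrableOn_Ici_iff_integrableOn_Ioi).mpr hi
  have hnn : 0 ≤ᵐ[volume.restrict (Ici (0:ℝ))] fun y => r * Real.exp (-(r * y)) * f y :=
    (ae_restrict_iff' measurableSet_Ici).mpr (ae_of_all _ (fun y hy => by
      have := h0 y hy; positivity))
  rw [← ofReal_integral_eq_lintegral_ofReal hIci hnn, integral_Ici_eq_integral_Ioi]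

lemma lintegral_exp_laplace' {r k : ℝ} (hr : 0 < r) (hk : 0 ≤ k) :
    ∫⁻ y, ENNReal.ofReal (Real.exp (-(k * y))) ∂expMeasure r
      = ENNReal.ofReal (r / (r + k)) := by
  have hrk : 0 < r + k := by linarith
  have heq : ∀ y : ℝ, r * Real.exp (-(r * y)) * Real.exp (-(k * y))
      = r * Real.exp (-((r + k) * y)) := by
    intro y
    rw [mul_assoc, ← Real.exp_add]
    congr 2
    ring
  have hint : IntegrableOn (fun y => r * Real.exp (-(r * y)) * Real.exp (-(k * y))) (Ioi 0) := by
    simp only [heq]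
    exact (integrableOn_exp_neg_mul_Ioi' hrk).const_mul r
  rw [lintegral_expMeasure_ofReal' hr (by fun_prop) (fun y _ => (Real.exp_pos _).le) hint]
  congr 1
  simp only [heq]
  rw [integral_const_mul, integral_exp_neg_mul_Ioi_zero' hrk, div_eq_mul_inv]

/-- Probability of positive secrecy rate for AF relaying -/
theorem prob_pos_secrecy_AF {Ω : Type*} [MeasurableSpace Ω] (μ : Measure Ω)
    [IsProbabilityMeasure μ] (γAB γAR γRB ρ : ℝ)
    (hAB : 0 < γAB) (hAR : 0 < γAR) (hRB : 0 < γRB) (hρ : 0 < ρ)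
    (X Y W : Ω → ℝ) (hXm : Measurable X) (hYm : Measurable Y) (hWm : Measurable W)
    (hX : Measure.map X μ = expMeasure (1 / γAB))
    (hY : Measure.map Y μ = expMeasure (1 / γAR))
    (hW : Measure.map W μ = expMeasure (1 / γRB))
    (hindep : iIndepFun ![X, Y, W] μ) :
    μ {ω | 1 < X ω / Y ω + W ω / (W ω + γAR + 1 / ρ)}
      = ENNReal.ofReal
          ((γAR + 1 / ρ) / γRB * (1 + γAR / γAB - 1)
              * Real.exp ((γAR + 1 / ρ) / γRB * (1 + γAR / γAB))
              * Ei (-((γAR + 1 / ρ) / γRB * (1 + γAR / γAB))) + 1) := by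
  set c : ℝ := γAR + 1 / ρ with hc_def
  set rX : ℝ := 1 / γAB with hrX_def
  set rY : ℝ := 1 / γAR with hrY_def
  set rW : ℝ := 1 / γRB with hrW_def
  set β : ℝ := 1 + γAR / γAB with hβ_def
  set b : ℝ := c * β with hb_def
  have hc : 0 < c := by rw [hc_def]; positivity
  have hrX : 0 < rX := by rw [hrX_def]; positivity
  have hrY : 0 < rY := by rw [hrY_def]; positivity
  have hrW : 0 < rW := by rw [hrW_def]; positivity
  have hβ1 : 1 ≤ β := by rw [hβ_def]; nlinarith [div_nonneg hAR.le hAB.le]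
  have hb : 0 < b := by rw [hb_def]; nlinarith
  have hcb : c ≤ b := by rw [hb_def]; nlinarith
  haveI iX : IsProbabilityMeasure (expMeasure rX) := isProbabilityMeasure_expMeasure hrX
  haveI iY : IsProbabilityMeasure (expMeasure rY) := isProbabilityMeasure_expMeasure hrY
  haveI iW : IsProbabilityMeasure (expMeasure rW) := isProbabilityMeasure_expMeasure hrW
  -- independence structure
  have hfm : ∀ i : Fin 3, Measurable (![X, Y, W] i) := by
    intro i; fin_cases i <;> assumption
  have h1 : IndepFun (fun a => (W a, Y a)) X μ :=
    hindep.indepFun_prodMk hfm 2 1 0 (by decide) (by decide)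
  have h2 : IndepFun W Y μ := hindep.indepFun (show (2:Fin 3) ≠ 1 by decide)
  have hmapWY : μ.map (fun ω => (W ω, Y ω)) = (expMeasure rW).prod (expMeasure rY) := by
    rw [(indepFun_iff_map_prod_eq_prod_map_map hWm.aemeasurable hYm.aemeasurable).mp h2,
      hW, hY]
  have hmapT : μ.map (fun ω => ((W ω, Y ω), X ω))
      = ((expMeasure rW).prod (expMeasure rY)).prod (expMeasure rX) := by
    rw [(indepFun_iff_map_prod_eq_prod_map_map
      ((hWm.prodMk hYm).aemeasurable) hXm.aemeasurable).mp h1, hmapWY, hX]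
  -- the event as a preimage
  set S : Set ((ℝ × ℝ) × ℝ) := {p | 1 < p.2 / p.1.2 + p.1.1 / (p.1.1 + c)} with hS_def
  have hS : MeasurableSet S := by
    apply measurableSet_lt measurable_const
    fun_prop
  have hE : {ω | 1 < X ω / Y ω + W ω / (W ω + γAR + 1 / ρ)}
      = (fun ω => ((W ω, Y ω), X ω)) ⁻¹' S := by
    ext ω
    simp only [hS_def, mem_setOf_eq, mem_preimage, hc_def]
    rw [add_assoc]
  rw [hE, ← Measure.map_apply ((hWm.prodMk hYm).prodMk hXm) hS, hmapT,
    Measure.prod_apply hS]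
  -- a.e. positivity on the product
  have haeq : ∀ᵐ q ∂((expMeasure rW).prod (expMeasure rY)), 0 < q.1 ∧ 0 < q.2 := by
    rw [ae_iff]
    have hsub : {q : ℝ × ℝ | ¬(0 < q.1 ∧ 0 < q.2)}
        ⊆ (Iic 0 ×ˢ (univ : Set ℝ)) ∪ ((univ : Set ℝ) ×ˢ Iic 0) := by
      intro q hq
      simp only [mem_setOf_eq, not_and_or, not_lt] at hq
      rcases hq with h | h
      · exact Or.inl (by simp [h])
      · exact Or.inr (by simp [h])
    refine measure_mono_null hsub (measure_union_null ?_ ?_)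
    · rw [Measure.prod_prod, expMeasure_Iic_zero' hrW, zero_mul]
    · rw [Measure.prod_prod, expMeasure_Iic_zero' hrY, mul_zero]
  -- rewrite the inner measure a.e.
  have hptwise : ∀ᵐ q ∂((expMeasure rW).prod (expMeasure rY)),
      expMeasure rX (Prod.mk q ⁻¹' S)
        = ENNReal.ofReal (Real.exp (-(rX * c / (q.1 + c) * q.2))) := by
    filter_upwards [haeq] with q hq
    obtain ⟨hw, hy⟩ := hq
    have hwc : 0 < q.1 + c := by linarith
    have h1v : 1 - q.1 / (q.1 + c) = c / (q.1 + c) := by field_simp; ring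
    have hset : Prod.mk q ⁻¹' S = Ioi (c / (q.1 + c) * q.2) := by
      ext x
      simp only [hS_def, mem_preimage, mem_setOf_eq, mem_Ioi]
      constructor
      · intro h
        have h' : c / (q.1 + c) < x / q.2 := by rw [← h1v]; linarith
        have := (lt_div_iff₀ hy).mp h'
        linarith
      · intro h
        have h' : c / (q.1 + c) < x / q.2 := (lt_div_iff₀ hy).mpr (by linarith)
        rw [← h1v] at h'
        linarith
    rw [hset, expMeasure_Ioi' hrX (by positivity)]
    congr 2
    ring
  rw [lintegral_congr_ae hptwise]
  -- Fubini
  have hFm : Measurable (fun q : ℝ × ℝ =>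
      ENNReal.ofReal (Real.exp (-(rX * c / (q.1 + c) * q.2)))) := by fun_prop
  rw [lintegral_prod _ hFm.aemeasurable]
  -- inner integral over y
  have hinner : ∀ᵐ w ∂expMeasure rW,
      (∫⁻ y, ENNReal.ofReal (Real.exp (-(rX * c / (w + c) * y))) ∂expMeasure rY)
        = ENNReal.ofReal ((w + c) / (w + b)) := by
    filter_upwards [expMeasure_ae_pos' hrW] with w hw
    have hwc : 0 < w + c := by linarith
    have hwb : 0 < w + b := by linarith
    rw [lintegral_exp_laplace' hrY (by positivity)]
    congr 1
    rw [div_eq_div_iff (by positivity) (by positivity)]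
    simp only [hrY_def, hrX_def, hb_def, hβ_def, hc_def]
    field_simp
    ring
  rw [lintegral_congr_ae hinner]
  -- outer integral over w
  have hfm2 : Measurable (fun w : ℝ => (w + c) / (w + b)) := by fun_prop
  have hnn2 : ∀ w : ℝ, 0 ≤ w → 0 ≤ (w + c) / (w + b) := by
    intro w hw
    exact div_nonneg (by linarith) (by linarith)
  have hint2 : IntegrableOn (fun w => rW * Real.exp (-(rW * w)) * ((w + c) / (w + b)))
      (Ioi 0) := by
    refine Integrable.mono' ((integrableOn_exp_neg_mul_Ioi' (a := 0) hrW).const_mul rW)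
      ?_ ?_
    · exact (((Real.measurable_exp.comp (measurable_id.const_mul rW).neg).const_mul rW).mul
        hfm2).aestronglyMeasurable
    · refine (ae_restrict_iff' measurableSet_Ioi).mpr (ae_of_all _ fun w hw => ?_)
      have hw0 : (0:ℝ) < w := hw
      have hwb : 0 < w + b := by linarith
      rw [Real.norm_eq_abs, abs_of_nonneg (by positivity)]
      have hle : (w + c) / (w + b) ≤ 1 := by
        rw [div_le_one hwb]; linarith
      have h0 : 0 ≤ rW * Real.exp (-(rW * w)) := by positivity
      calc rW * Real.exp (-(rW * w)) * ((w + c) / (w + b))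
          ≤ rW * Real.exp (-(rW * w)) * 1 := by
            exact mul_le_mul_of_nonneg_left hle h0
        _ = rW * Real.exp (-(rW * w)) := by ring
  rw [lintegral_expMeasure_ofReal' hrW hfm2 hnn2 hint2, final_integral' hrW hc hcb]
  congr 1
  have harg : rW * b = (γAR + 1 / ρ) / γRB * (1 + γAR / γAB) := by
    simp only [hrW_def, hb_def, hβ_def, hc_def]
    ring
  have hcoef : rW * (b - c) = (γAR + 1 / ρ) / γRB * (1 + γAR / γAB - 1) := by
    simp only [hrW_def, hb_def, hβ_def, hc_def]
    ring
  rw [harg, hcoef]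
end

section
/- Let X be exponential with mean γ_AB and Y the sum of K independent exponentials each with mean γ_AR (i.e., Y is Gamma(K, γ_AR)), X independent of Y, ρ > 0, R ≥ 0. Then P((1 + ρX)/(1 + ρY) < 2^R) = 1 − (γ_AB/(2^R γ_AR + γ_AB))^K · exp(−(2^R − 1)/(ρ γ_AB)). -/
open MeasureTheory ProbabilityTheory Real Set
open scoped ENNReal

lemma expMeasure_Iio {r : ℝ} (hr : 0 < r) (t : ℝ) :
    expMeasure r (Iio t)
      = ENNReal.ofReal (if 0 ≤ t then 1 - Real.exp (-(r * t)) else 0) := by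
  have hsing : expMeasure r {t} = 0 := by
    rw [expMeasure, gammaMeasure, withDensity_apply _ (measurableSet_singleton t),
      lintegral_singleton]
    simp
  have hiic : expMeasure r (Iic t) = expMeasure r (Iio t) := by
    have : Iic t = Iio t ∪ {t} := by
      ext x; simp [le_iff_lt_or_eq]
    rw [this, measure_union (by simp) (measurableSet_singleton t), hsing, add_zero]
  have : expMeasure r (Iic t) = ∫⁻ y in Iic t, exponentialPDF r y := by
    rw [expMeasure, gammaMeasure, withDensity_apply _ measurableSet_Iic]
    rfl
  rw [← hiic, this, lintegral_exponentialPDF_eq_antiDeriv hr t]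

lemma gamma_laplace {a r s : ℝ} (ha : 0 < a) (hr : 0 < r) (hs : 0 ≤ s) :
    ∫⁻ y, ENNReal.ofReal (Real.exp (-(s * y))) * gammaPDF a r y
      = ENNReal.ofReal ((r / (r + s)) ^ a) := by
  have hrs : 0 < r + s := by linarith
  have hpoint : ∀ y, ENNReal.ofReal (Real.exp (-(s * y))) * gammaPDF a r y
      = ENNReal.ofReal ((r / (r + s)) ^ a) * gammaPDF a (r + s) y := by
    intro y
    rcases lt_or_ge y 0 with hy | hy
    · rw [gammaPDF_of_neg hy, gammaPDF_of_neg hy, mul_zero, mul_zero]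
    · rw [gammaPDF_of_nonneg hy, gammaPDF_of_nonneg hy,
        ← ENNReal.ofReal_mul (Real.exp_pos _).le,
        ← ENNReal.ofReal_mul (by positivity)]
      congr 1
      rw [Real.div_rpow hr.le hrs.le]
      have h1 : (r + s) ^ a ≠ 0 := by positivity
      have h2 : Real.exp (-(s * y)) * Real.exp (-(r * y)) = Real.exp (-((r + s) * y)) := by
        rw [← Real.exp_add]; ring_nf
      rw [← h2]
      field_simp
  simp_rw [hpoint]
  rw [lintegral_const_mul _ (by exact measurable_gammaPDFReal a (r+s) |>.ennreal_ofReal),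
    lintegral_gammaPDF_eq_one ha hrs, mul_one]

/-- Multi-antenna direct-transmission SOP: `X` exponential with mean `γAB`,
`Y ~ Gamma(K, 1/γAR)` (sum of `K` i.i.d. exponentials with mean `γAR`), independent.
Then `P((1+ρX)/(1+ρY) < 2^R) = 1 - (γAB/(2^R γAR + γAB))^K exp(-(2^R-1)/(ργAB))`. -/
theorem sop_DT_multiantenna {Ω : Type*} [MeasurableSpace Ω] (μ : Measure Ω)
    [IsProbabilityMeasure μ] (γAB γAR ρ R : ℝ) (K : ℕ)
    (hAB : 0 < γAB) (hAR : 0 < γAR) (hρ : 0 < ρ) (hR : 0 ≤ R) (hK : 0 < K)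
    (X Y : Ω → ℝ) (hXm : Measurable X) (hYm : Measurable Y)
    (hX : Measure.map X μ = expMeasure (1 / γAB))
    (hY : Measure.map Y μ = gammaMeasure (K : ℝ) (1 / γAR))
    (hXY : IndepFun X Y μ) :
    μ {ω | (1 + ρ * X ω) / (1 + ρ * Y ω) < (2 : ℝ) ^ R}
      = ENNReal.ofReal
          (1 - (γAB / ((2 : ℝ) ^ R * γAR + γAB)) ^ K
              * Real.exp (-((2 : ℝ) ^ R - 1) / (ρ * γAB))) := by
  have hrAB : 0 < 1 / γAB := by positivity
  have hrAR : 0 < 1 / γAR := by positivity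
  have hKpos : (0 : ℝ) < (K : ℝ) := by exact_mod_cast hK
  have hPexp : IsProbabilityMeasure (expMeasure (1 / γAB)) :=
    isProbabilityMeasure_expMeasure hrAB
  have hPgam : IsProbabilityMeasure (gammaMeasure (K : ℝ) (1 / γAR)) :=
    isProbabilityMeasure_gammaMeasure hKpos hrAR
  set c : ℝ := (2 : ℝ) ^ R with hcdef
  have hc1 : 1 ≤ c := Real.one_le_rpow one_le_two hR
  set a : ℝ := (c - 1) / ρ with hadef
  have ha : 0 ≤ a := div_nonneg (by linarith) hρ.le
  have hρa : ρ * a = c - 1 := by rw [hadef]; field_simp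
  -- Y is a.e. nonnegative
  have hY0 : ∀ᵐ ω ∂μ, 0 ≤ Y ω := by
    rw [ae_iff]
    have hst : {ω | ¬ 0 ≤ Y ω} = Y ⁻¹' (Iio 0) := by ext ω; simp [not_le]
    rw [hst, ← Measure.map_apply hYm measurableSet_Iio, hY, gammaMeasure,
      withDensity_apply _ measurableSet_Iio, lintegral_gammaPDF_of_nonpos le_rfl]
  -- rewrite the event
  have hev : μ {ω | (1 + ρ * X ω) / (1 + ρ * Y ω) < c}
      = μ {ω | X ω < a + c * Y ω} := by
    apply measure_congr
    filter_upwards [hY0] with ω hω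
    have hden : 0 < 1 + ρ * Y ω := by nlinarith
    show ((1 + ρ * X ω) / (1 + ρ * Y ω) < c) = (X ω < a + c * Y ω)
    rw [eq_iff_iff]
    rw [div_lt_iff₀ hden]
    constructor <;> intro h <;> nlinarith
  -- pass to the product measure
  have hmap : μ.map (fun ω => (X ω, Y ω))
      = (expMeasure (1 / γAB)).prod (gammaMeasure (K : ℝ) (1 / γAR)) := by
    rw [← hX, ← hY]
    exact (indepFun_iff_map_prod_eq_prod_map_map hXm.aemeasurable hYm.aemeasurable).mp hXY
  have hsetm : MeasurableSet {p : ℝ × ℝ | p.1 < a + c * p.2} :=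
    measurableSet_lt measurable_fst (by fun_prop)
  have hev2 : μ {ω | X ω < a + c * Y ω}
      = ((expMeasure (1 / γAB)).prod (gammaMeasure (K : ℝ) (1 / γAR)))
          {p : ℝ × ℝ | p.1 < a + c * p.2} := by
    rw [← hmap, Measure.map_apply (hXm.prodMk hYm) hsetm]
    rfl
  rw [hev, hev2, Measure.prod_apply_symm hsetm]
  have hsl : ∀ y : ℝ,
      (fun x => (x, y)) ⁻¹' {p : ℝ × ℝ | p.1 < a + c * p.2} = Iio (a + c * y) :=
    fun y => rfl
  simp only [hsl, expMeasure_Iio hrAB]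
  -- the integrand
  set g : ℝ → ℝ≥0∞ := fun y => ENNReal.ofReal
      (if 0 ≤ a + c * y then 1 - Real.exp (-(1 / γAB * (a + c * y))) else 0) with hgdef
  have hgm : Measurable g := by
    apply Measurable.ennreal_ofReal
    exact Measurable.ite (measurableSet_le measurable_const (by fun_prop)) (by fun_prop)
      measurable_const
  have hgamm : Measurable (gammaPDF (K : ℝ) (1 / γAR)) :=
    (measurable_gammaPDFReal _ _).ennreal_ofReal
  rw [gammaMeasure, lintegral_withDensity_eq_lintegral_mul _ hgamm hgm]
  -- pointwise decomposition
  have hc0 : 0 < c := lt_of_lt_of_le one_pos hc1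
  set F2 : ℝ → ℝ≥0∞ := fun y => ENNReal.ofReal (Real.exp (-(1 / γAB * a))) *
      (ENNReal.ofReal (Real.exp (-(1 / γAB * c * y))) * gammaPDF (K : ℝ) (1 / γAR) y)
    with hF2def
  have hpoint : ∀ y, (gammaPDF (K : ℝ) (1 / γAR) * g) y
      = gammaPDF (K : ℝ) (1 / γAR) y - F2 y := by
    intro y
    simp only [Pi.mul_apply, hgdef, hF2def]
    rcases lt_or_ge y 0 with hy | hy
    · rw [gammaPDF_of_neg hy]; simp
    · have hacy : 0 ≤ a + c * y := by positivity
      have hfin : gammaPDF (K : ℝ) (1 / γAR) y ≠ ⊤ := ENNReal.ofReal_ne_top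
      rw [if_pos hacy, ENNReal.ofReal_sub _ (Real.exp_pos _).le, ENNReal.ofReal_one,
        mul_comm (gammaPDF (K : ℝ) (1 / γAR) y),
        ENNReal.sub_mul (fun _ _ => hfin), one_mul]
      congr 1
      have harg : -(1 / γAB * (a + c * y)) = -(1 / γAB * a) + -(1 / γAB * c * y) := by ring
      rw [harg, Real.exp_add, ENNReal.ofReal_mul (Real.exp_pos _).le, mul_assoc]
  simp only [funext hpoint]
  -- compute the integral of F2
  have hFm : Measurable fun y =>
      ENNReal.ofReal (Real.exp (-(1 / γAB * c * y))) * gammaPDF (K : ℝ) (1 / γAR) y :=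
    (by fun_prop : Measurable fun y => ENNReal.ofReal (Real.exp (-(1 / γAB * c * y)))).mul hgamm
  have hF2meas : Measurable F2 := hFm.const_mul _
  have hLap : ∫⁻ y, ENNReal.ofReal (Real.exp (-(1 / γAB * c * y)))
        * gammaPDF (K : ℝ) (1 / γAR) y
      = ENNReal.ofReal ((1 / γAR / (1 / γAR + 1 / γAB * c)) ^ (K : ℝ)) := by
    have := gamma_laplace (s := 1 / γAB * c) hKpos hrAR (by positivity)
    simpa [mul_assoc] using this
  have hF2int : ∫⁻ y, F2 y = ENNReal.ofReal (Real.exp (-(1 / γAB * a)))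
      * ENNReal.ofReal ((1 / γAR / (1 / γAR + 1 / γAB * c)) ^ (K : ℝ)) := by
    simp only [hF2def]
    rw [lintegral_const_mul _ hFm, hLap]
  have hF2le : F2 ≤ᵐ[volume] gammaPDF (K : ℝ) (1 / γAR) := by
    apply ae_of_all
    intro y
    rcases lt_or_ge y 0 with hy | hy
    · simp [hF2def, gammaPDF_of_neg hy]
    · calc F2 y ≤ 1 * (1 * gammaPDF (K : ℝ) (1 / γAR) y) := by
            apply mul_le_mul' (ENNReal.ofReal_le_one.mpr (Real.exp_le_one_iff.mpr
              (neg_nonpos.mpr (by positivity))))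
            apply mul_le_mul' (ENNReal.ofReal_le_one.mpr (Real.exp_le_one_iff.mpr
              (neg_nonpos.mpr (by positivity))))
            exact le_rfl
        _ = gammaPDF (K : ℝ) (1 / γAR) y := by rw [one_mul, one_mul]
  have hF2ne : ∫⁻ y, F2 y ≠ ⊤ := by
    rw [hF2int]
    exact ENNReal.mul_ne_top ENNReal.ofReal_ne_top ENNReal.ofReal_ne_top
  rw [lintegral_sub hF2meas hF2ne hF2le, lintegral_gammaPDF_eq_one hKpos hrAR, hF2int]
  -- final arithmetic
  have hden2 : 0 < c * γAR + γAB := by positivity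
  have hbase : 1 / γAR / (1 / γAR + 1 / γAB * c) = γAB / (c * γAR + γAB) := by
    rw [div_eq_div_iff (by positivity) hden2.ne']
    field_simp
    ring
  have hexp : -(1 / γAB * a) = -(c - 1) / (ρ * γAB) := by
    rw [hadef]
    ring
  rw [hbase, hexp, ← ENNReal.ofReal_mul (Real.exp_pos _).le,
    ← Real.rpow_natCast (γAB / (c * γAR + γAB)) K]
  have hpnn : (0:ℝ) ≤ (γAB / (c * γAR + γAB)) ^ (K : ℝ) :=
    Real.rpow_nonneg (div_nonneg hAB.le hden2.le) _
  have hmc : (γAB / (c * γAR + γAB)) ^ (K : ℝ) * Real.exp (-(c - 1) / (ρ * γAB))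
      = Real.exp (-(c - 1) / (ρ * γAB)) * (γAB / (c * γAR + γAB)) ^ (K : ℝ) := mul_comm _ _
  rw [hmc, ← ENNReal.ofReal_one, ← ENNReal.ofReal_sub _ (mul_nonneg (Real.exp_nonneg _) hpnn)]
end
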